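/- Let μ, λ ∈ ℂ with Im μ < 0 and Im λ > 0, and let u ∈ H, a ∈ E, b ∈ E_* be such that u + (Γ_*(A* + μ)^{-1})* b ∈ D(A), u + (Γ(A + λ)^{-1})* a ∈ D(A*), and a = S(−μ)* b + iΓ(u + (Γ_*(A* + μ)^{-1})* b). Then A*(u + (Γ(A + λ)^{-1})* a) + λ̄(Γ(A + λ)^{-1})* a = A(u + (Γ_*(A* + μ)^{-1})* b) + μ̄(Γ_*(A* + μ)^{-1})* b, where λ̄, μ̄ denote complex conjugates. -/

import Mathlib

open scoped ComplexInnerProductSpace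

noncomputable section

/-- A maximal dissipative operator on a complex Hilbert space `H`, together with the
(derivable) data of its resolvent on the open lower half-plane and the resolvent of its
adjoint on the open upper half-plane.  Here the inner product `⟪·,·⟫` is conjugate-linear
in the first variable, so that the paper's `⟨x, y⟩` corresponds to `⟪y, x⟫`. -/
structure MDO (H : Type*) [NormedAddCommGroup H] [InnerProductSpace ℂ H]
    [CompleteSpace H] where
  /-- The underlying densely defined operator. -/
  A : H →ₗ.[ℂ] H
  dense_dom : Dense (A.domain : Set H)
  dissipative : ∀ u : A.domain, 0 ≤ (⟪(u : H), A u⟫).im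
  /-- `R z` is the bounded inverse `(A - z)⁻¹`, for `Im z < 0`. -/
  R : ℂ → H →L[ℂ] H
  R_mem : ∀ z, z.im < 0 → ∀ h : H, R z h ∈ A.domain
  R_right : ∀ z (hz : z.im < 0) (h : H), A ⟨R z h, R_mem z hz h⟩ - z • R z h = h
  R_left : ∀ z, z.im < 0 → ∀ u : A.domain, R z (A u - z • (u : H)) = (u : H)
  dense_dom_star : Dense (A.adjoint.domain : Set H)
  anti_dissipative_star : ∀ u : A.adjoint.domain, (⟪(u : H), A.adjoint u⟫).im ≤ 0
  /-- `Rs z` is the bounded inverse `(A* - z)⁻¹`, for `Im z > 0`. -/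
  Rs : ℂ → H →L[ℂ] H
  Rs_mem : ∀ z, 0 < z.im → ∀ h : H, Rs z h ∈ A.adjoint.domain
  Rs_right : ∀ z (hz : 0 < z.im) (h : H),
    A.adjoint ⟨Rs z h, Rs_mem z hz h⟩ - z • Rs z h = h
  Rs_left : ∀ z, 0 < z.im → ∀ u : A.adjoint.domain,
    Rs z (A.adjoint u - z • (u : H)) = (u : H)

/-- A maximal dissipative operator together with boundary operators `Γ`, `Γ_*` satisfying
the abstract Lagrange identities, and the bounded compositions `ΓR z = Γ ∘ (A - z)⁻¹`
(for `Im z < 0`) and `ΓsRs z = Γ_* ∘ (A* - z)⁻¹` (for `Im z > 0`). -/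
structure StrausSetting (H E Es : Type*)
    [NormedAddCommGroup H] [InnerProductSpace ℂ H] [CompleteSpace H]
    [NormedAddCommGroup E] [InnerProductSpace ℂ E] [CompleteSpace E]
    [NormedAddCommGroup Es] [InnerProductSpace ℂ Es] [CompleteSpace Es]
    extends MDO H where
  Γ : A.domain →ₗ[ℂ] E
  Γ_bdd : ∃ C : ℝ, ∀ u : A.domain, ‖Γ u‖ ≤ C * (‖(u : H)‖ + ‖A u‖)
  Γ_dense : DenseRange Γ
  lagrange : ∀ u v : A.domain,
    ⟪(v : H), A u⟫ - ⟪A v, (u : H)⟫ = Complex.I * ⟪Γ v, Γ u⟫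
  Γs : A.adjoint.domain →ₗ[ℂ] Es
  Γs_bdd : ∃ C : ℝ, ∀ u : A.adjoint.domain,
    ‖Γs u‖ ≤ C * (‖(u : H)‖ + ‖A.adjoint u‖)
  Γs_dense : DenseRange Γs
  lagrange_star : ∀ u v : A.adjoint.domain,
    ⟪(v : H), A.adjoint u⟫ - ⟪A.adjoint v, (u : H)⟫ = -Complex.I * ⟪Γs v, Γs u⟫
  /-- `ΓR z = Γ ∘ (A - z)⁻¹` as a bounded operator `H →L[ℂ] E`, for `Im z < 0`. -/
  ΓR : ℂ → H →L[ℂ] E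
  ΓR_spec : ∀ z (hz : z.im < 0) (h : H), ΓR z h = Γ ⟨R z h, R_mem z hz h⟩
  /-- `ΓsRs z = Γ_* ∘ (A* - z)⁻¹` as a bounded operator `H →L[ℂ] Es`, for `Im z > 0`. -/
  ΓsRs : ℂ → H →L[ℂ] Es
  ΓsRs_spec : ∀ z (hz : 0 < z.im) (h : H), ΓsRs z h = Γs ⟨Rs z h, Rs_mem z hz h⟩

/-- The two formulae for the action of the dilation on `H` coincide:
under the domain conditions and the boundary condition (I),
`A*(u + (Γ(A + λ)⁻¹)* a) + λ̄(Γ(A + λ)⁻¹)* a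
  = A(u + (Γ_*(A* + μ)⁻¹)* b) + μ̄(Γ_*(A* + μ)⁻¹)* b`. -/
theorem stmt16 {H E Es : Type*}
    [NormedAddCommGroup H] [InnerProductSpace ℂ H] [CompleteSpace H]
    [NormedAddCommGroup E] [InnerProductSpace ℂ E] [CompleteSpace E]
    [NormedAddCommGroup Es] [InnerProductSpace ℂ Es] [CompleteSpace Es]
    (M : StrausSetting H E Es)
    (S : ℂ → E →L[ℂ] Es)
    (hS_norm : ∀ z : ℂ, 0 < z.im → ‖S z‖ ≤ 1)
    (hS : ∀ (z : ℂ), 0 < z.im → ∀ u : M.A.domain,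
      S z (M.Γ u) = M.ΓsRs z (M.A u - z • (u : H)))
    (mu lam : ℂ) (hmu : mu.im < 0) (hlam : 0 < lam.im)
    (u : H) (a : E) (b : Es)
    (h1 : u + ContinuousLinearMap.adjoint (M.ΓsRs (-mu)) b ∈ M.A.domain)
    (h2 : u + ContinuousLinearMap.adjoint (M.ΓR (-lam)) a ∈ M.A.adjoint.domain)
    (hI : a = ContinuousLinearMap.adjoint (S (-mu)) b
        + Complex.I •
            M.Γ ⟨u + ContinuousLinearMap.adjoint (M.ΓsRs (-mu)) b, h1⟩) :
    M.A.adjoint ⟨u + ContinuousLinearMap.adjoint (M.ΓR (-lam)) a, h2⟩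
        + (starRingEnd ℂ lam) • ContinuousLinearMap.adjoint (M.ΓR (-lam)) a
      = M.A ⟨u + ContinuousLinearMap.adjoint (M.ΓsRs (-mu)) b, h1⟩
        + (starRingEnd ℂ mu) • ContinuousLinearMap.adjoint (M.ΓsRs (-mu)) b := by
  classical
  set Ta := ContinuousLinearMap.adjoint (M.ΓR (-lam)) a with hTa_def
  set Tb := ContinuousLinearMap.adjoint (M.ΓsRs (-mu)) b with hTb_def
  have hlam' : (-lam).im < 0 := by simpa using neg_neg_of_pos hlam
  have hmu' : 0 < (-mu).im := by simpa using neg_pos_of_neg hmu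
  set w : M.A.adjoint.domain := ⟨u + Ta, h2⟩ with hw_def
  set v : M.A.domain := ⟨u + Tb, h1⟩ with hv_def
  have hform := M.A.adjoint_isFormalAdjoint M.dense_dom
  apply M.dense_dom.eq_of_inner_right ℂ
  intro c0 hc0
  obtain ⟨c, rfl⟩ : ∃ c : M.A.domain, (c : H) = c0 := ⟨⟨c0, hc0⟩, rfl⟩
  -- key: ⟪Ta, A c + lam • c⟫ = ⟪a, Γ c⟫
  have hRc : M.R (-lam) (M.A c + lam • (c : H)) = (c : H) := by
    have := M.R_left (-lam) hlam' c
    simpa [sub_neg_eq_add, neg_smul, sub_eq_add_neg] using this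
  have hΓRc : M.ΓR (-lam) (M.A c + lam • (c : H)) = M.Γ c := by
    rw [M.ΓR_spec (-lam) hlam' (M.A c + lam • (c : H))]
    congr 1
    exact Subtype.ext hRc
  have hTa1 : ⟪Ta, M.A c + lam • (c : H)⟫ = ⟪a, M.Γ c⟫ := by
    rw [hTa_def, ContinuousLinearMap.adjoint_inner_left, hΓRc]
  -- key: ⟪Tb, A c + mu • c⟫ = ⟪(S (-mu)).adjoint b, Γ c⟫
  have hSc : S (-mu) (M.Γ c) = M.ΓsRs (-mu) (M.A c + mu • (c : H)) := by
    have := hS (-mu) hmu' c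
    simpa [sub_neg_eq_add, neg_smul, sub_eq_add_neg] using this
  have hTb1 : ⟪Tb, M.A c + mu • (c : H)⟫
      = ⟪ContinuousLinearMap.adjoint (S (-mu)) b, M.Γ c⟫ := by
    rw [hTb_def, ContinuousLinearMap.adjoint_inner_left,
      ContinuousLinearMap.adjoint_inner_left, hSc]
  -- LHS inner product
  have hYc : ⟪(c : H), M.A.adjoint w + (starRingEnd ℂ lam) • Ta⟫
      = ⟪M.A c, u⟫ + starRingEnd ℂ (⟪a, M.Γ c⟫) := by
    have hadj : ⟪M.A.adjoint w, (c : H)⟫ = ⟪(w : H), M.A c⟫ := hform w c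
    have : ⟪M.A.adjoint w + (starRingEnd ℂ lam) • Ta, (c : H)⟫
        = ⟪(u : H), M.A c⟫ + ⟪a, M.Γ c⟫ := by
      rw [inner_add_left, inner_smul_left, hadj]
      have hw : (w : H) = u + Ta := rfl
      rw [hw, inner_add_left]
      have : starRingEnd ℂ (starRingEnd ℂ lam) * ⟪Ta, (c : H)⟫
          = ⟪Ta, lam • (c : H)⟫ := by
        rw [inner_smul_right, RingHomCompTriple.comp_apply, RingHom.id_apply]
      rw [this, add_assoc, ← inner_add_right, hTa1]
    calc ⟪(c : H), M.A.adjoint w + (starRingEnd ℂ lam) • Ta⟫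
        = starRingEnd ℂ ⟪M.A.adjoint w + (starRingEnd ℂ lam) • Ta, (c : H)⟫ :=
          (inner_conj_symm _ _).symm
      _ = starRingEnd ℂ (⟪(u : H), M.A c⟫ + ⟪a, M.Γ c⟫) := by rw [this]
      _ = ⟪M.A c, u⟫ + starRingEnd ℂ (⟪a, M.Γ c⟫) := by
          rw [map_add, inner_conj_symm]
  -- RHS inner product
  have hZc : ⟪(c : H), M.A v + (starRingEnd ℂ mu) • Tb⟫
      = ⟪M.A c, u⟫ + starRingEnd ℂ (⟪a, M.Γ c⟫) := by
    have hlag := M.lagrange v c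
    have : ⟪M.A v + (starRingEnd ℂ mu) • Tb, (c : H)⟫
        = ⟪(u : H), M.A c⟫ + ⟪ContinuousLinearMap.adjoint (S (-mu)) b, M.Γ c⟫
          + starRingEnd ℂ (Complex.I * ⟪M.Γ c, M.Γ v⟫) := by
      have hAvc : ⟪M.A v, (c : H)⟫
          = ⟪(v : H), M.A c⟫ + starRingEnd ℂ (Complex.I * ⟪M.Γ c, M.Γ v⟫) := by
        have h1' : ⟪(c : H), M.A v⟫
            = ⟪M.A c, (v : H)⟫ + Complex.I * ⟪M.Γ c, M.Γ v⟫ := by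
          linear_combination hlag
        calc ⟪M.A v, (c : H)⟫ = starRingEnd ℂ ⟪(c : H), M.A v⟫ :=
              (inner_conj_symm _ _).symm
          _ = starRingEnd ℂ (⟪M.A c, (v : H)⟫ + Complex.I * ⟪M.Γ c, M.Γ v⟫) := by
              rw [h1']
          _ = ⟪(v : H), M.A c⟫ + starRingEnd ℂ (Complex.I * ⟪M.Γ c, M.Γ v⟫) := by
              rw [map_add, inner_conj_symm]
      rw [inner_add_left, inner_smul_left, hAvc]
      have hv' : (v : H) = u + Tb := rfl
      rw [hv', inner_add_left]
      have hsm : starRingEnd ℂ (starRingEnd ℂ mu) * ⟪Tb, (c : H)⟫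
          = ⟪Tb, mu • (c : H)⟫ := by
        rw [inner_smul_right, RingHomCompTriple.comp_apply, RingHom.id_apply]
      rw [hsm]
      have : ⟪Tb, M.A c⟫ + ⟪Tb, mu • (c : H)⟫
          = ⟪ContinuousLinearMap.adjoint (S (-mu)) b, M.Γ c⟫ := by
        rw [← inner_add_right, hTb1]
      linear_combination this
    have haΓ : starRingEnd ℂ ⟪a, M.Γ c⟫
        = starRingEnd ℂ ⟪ContinuousLinearMap.adjoint (S (-mu)) b, M.Γ c⟫
          + Complex.I * ⟪M.Γ c, M.Γ v⟫ := by
      rw [hI, inner_add_left, inner_smul_left, map_add, map_mul,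
        Complex.conj_conj]
      simp [inner_conj_symm]
    calc ⟪(c : H), M.A v + (starRingEnd ℂ mu) • Tb⟫
        = starRingEnd ℂ ⟪M.A v + (starRingEnd ℂ mu) • Tb, (c : H)⟫ :=
          (inner_conj_symm _ _).symm
      _ = starRingEnd ℂ (⟪(u : H), M.A c⟫
            + ⟪ContinuousLinearMap.adjoint (S (-mu)) b, M.Γ c⟫
            + starRingEnd ℂ (Complex.I * ⟪M.Γ c, M.Γ v⟫)) := by rw [this]
      _ = ⟪M.A c, u⟫ + starRingEnd ℂ (⟪a, M.Γ c⟫) := by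
          rw [haΓ]
          rw [map_add, map_add, inner_conj_symm]
          simp only [RingHomCompTriple.comp_apply, RingHom.id_apply,
            Complex.conj_conj, starRingEnd_self_apply]
          ring
  rw [hYc, hZc]

end
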